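/- arXiv:0809.2130 — 3 statements merged into one kernel-verified Lean document; each statement's English description precedes it below -/
import Mathlib

section
/- Let G be a finite groupoid with object set G₀, and let a, b : G₀ → ℝ with a nowhere vanishing. Assume b/a is constant on orbits, i.e., λ(x) = b(x)/a(x) depends only on the orbit of x. Then ∑_{y ∈ G₀} b(y) / (∑_{g ∈ r⁻¹(y)} a(l(g))) = ∑_{O ∈ G₀/G} λ(O)/#(Aut(x_O)), where l(g) is the source of g and r⁻¹(y) the morphisms with target y. -/
open CategoryTheory Finset

/-- Let `G` be a finite groupoid with objects `G₀` and `a b : G₀ → ℝ` with `a` nowhere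
vanishing, such that `λ = b/a` is constant on orbits.  Then the weighted volume
`∑_{y} b(y) / (∑_{g ∈ r⁻¹(y)} a(l(g)))` equals `∑_{orbits O} λ(O) / #(Aut x_O)`. -/
theorem weighted_volume_eq_orbit_sum
    (C : Type*) [Groupoid C] [Finite C] [∀ x y : C, Finite (x ⟶ y)]
    (a b : C → ℝ) (ha : ∀ x, a x ≠ 0)
    (hinv : ∀ x y : C, Nonempty (x ≅ y) → b x / a x = b y / a y)
    (hden : ∀ y : C, ∑' g : (Σ x : C, x ⟶ y), a g.1 ≠ 0) :
    ∑' y : C, b y / (∑' g : (Σ x : C, x ⟶ y), a g.1) =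
      ∑' O : Quotient (isIsomorphicSetoid C),
        (b (Quotient.out O) / a (Quotient.out O)) / Nat.card (Aut (Quotient.out O)) := by
  classical
  have := Fintype.ofFinite C
  have hFh : ∀ x y : C, Fintype (x ⟶ y) := fun x y => Fintype.ofFinite _
  set q : C → Quotient (isIsomorphicSetoid C) := Quotient.mk _ with hq
  -- hom cardinality equals aut cardinality when isomorphic
  have hcardAut : ∀ x y : C, (x ≅ y) → Nat.card (Aut x) = Nat.card (Aut y) := by
    intro x y i
    exact Nat.card_congr
      { toFun := fun f => i.symm ≪≫ f ≪≫ i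
        invFun := fun f => i ≪≫ f ≪≫ i.symm
        left_inv := fun (f : x ≅ x) => by simp; rfl
        right_inv := fun (f : y ≅ y) => by simp; rfl }
  have hcard : ∀ x y : C, Nonempty (x ≅ y) → Nat.card (x ⟶ y) = Nat.card (Aut y) := by
    intro x y ⟨i⟩
    have e1 : (x ⟶ y) ≃ (y ⟶ y) :=
      { toFun := fun g => i.inv ≫ g
        invFun := fun h => i.hom ≫ h
        left_inv := fun g => by simp
        right_inv := fun h => by simp }
    rw [Nat.card_congr e1, Nat.card_congr (Groupoid.isoEquivHom y y).symm]
    rfl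
  have hempty : ∀ x y : C, ¬ Nonempty (x ≅ y) → IsEmpty (x ⟶ y) := by
    intro x y h
    exact ⟨fun g => h ⟨(Groupoid.isoEquivHom x y).symm g⟩⟩
  set S : Quotient (isIsomorphicSetoid C) → ℝ :=
    fun O => ∑ x ∈ univ.filter (fun x => q x = O), a x with hS
  have hqe : ∀ x y : C, q x = q y ↔ Nonempty (x ≅ y) := by
    intro x y
    exact Quotient.eq (r := isIsomorphicSetoid C)
  -- denominator formula
  have hD : ∀ y : C, (∑' g : (Σ x : C, x ⟶ y), a g.1)
      = (Nat.card (Aut y) : ℝ) * S (q y) := by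
    intro y
    rw [tsum_fintype, ← Finset.univ_sigma_univ, Finset.sum_sigma]
    have : ∀ x : C, ∑ _g : (x ⟶ y), a x = (Nat.card (x ⟶ y) : ℝ) * a x := by
      intro x
      rw [Finset.sum_const, nsmul_eq_mul, Nat.card_eq_fintype_card, Finset.card_univ]
    calc ∑ x : C, ∑ _g : (x ⟶ y), a x
        = ∑ x : C, (Nat.card (x ⟶ y) : ℝ) * a x := by
          exact Finset.sum_congr rfl fun x _ => this x
      _ = ∑ x ∈ univ.filter (fun x => q x = q y), (Nat.card (x ⟶ y) : ℝ) * a x := by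
          rw [Finset.sum_filter_of_ne]
          intro x _ hne
          by_contra hx
          rw [hqe] at hx
          have := hempty x y hx
          simp [Nat.card_of_isEmpty] at hne
      _ = ∑ x ∈ univ.filter (fun x => q x = q y), (Nat.card (Aut y) : ℝ) * a x := by
          refine Finset.sum_congr rfl fun x hx => ?_
          rw [Finset.mem_filter, hqe] at hx
          rw [hcard x y hx.2]
      _ = (Nat.card (Aut y) : ℝ) * S (q y) := by
          rw [hS, Finset.mul_sum]
  -- main computation
  rw [tsum_fintype, tsum_fintype]
  rw [← Finset.sum_fiberwise univ q (fun y => b y / (∑' g : (Σ x : C, x ⟶ y), a g.1))]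
  refine Finset.sum_congr rfl fun O _ => ?_
  set o := Quotient.out O with ho
  have hoO : q o = O := Quotient.out_eq O
  have hSne : S O ≠ 0 ∧ (Nat.card (Aut o) : ℝ) ≠ 0 := by
    have := hden o
    rw [hD o, hoO] at this
    exact ⟨right_ne_zero_of_mul this, left_ne_zero_of_mul this⟩
  calc ∑ y ∈ univ.filter (fun y => q y = O), b y / (∑' g : (Σ x : C, x ⟶ y), a g.1)
      = ∑ y ∈ univ.filter (fun y => q y = O),
          (b o / a o) * a y / ((Nat.card (Aut o) : ℝ) * S O) := by
        refine Finset.sum_congr rfl fun y hy => ?_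
        rw [Finset.mem_filter] at hy
        have hyo : Nonempty (o ≅ y) := by
          rw [← hqe]; rw [hoO, hy.2]
        obtain ⟨i⟩ := hyo
        have h1 : b o / a o = b y / a y := hinv o y ⟨i⟩
        have h2 : b y = (b o / a o) * a y := by
          rw [h1, div_mul_cancel₀ _ (ha y)]
        rw [hD y, hy.2, hcardAut y o i.symm, h2]
    _ = (b o / a o) / (Nat.card (Aut o) : ℝ) := by
        rw [← Finset.sum_div, ← Finset.mul_sum]
        have hs : ∑ i ∈ filter (fun y => q y = O) univ, a i = S O := rfl
        rw [hs, mul_comm ((Nat.card (Aut o) : ℝ)) (S O),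
          mul_comm (b o / a o) (S O), mul_div_mul_left _ _ hSne.1]
end

section
/- The groupoid cardinality is invariant under equivalence: if finite groupoids G and G' are equivalent categories, then ∑_{O ∈ G₀/G} 1/#(Aut_G(x_O)) = ∑_{O' ∈ G₀'/G'} 1/#(Aut_{G'}(x'_{O'})). -/
open CategoryTheory

noncomputable def groupoidCard (C : Type*) [Groupoid C] : ℝ :=
  ∑' O : Quotient (isIsomorphicSetoid C), (1 : ℝ) / Nat.card (Aut (Quotient.out O))

/-- The equivalence on isomorphism classes induced by an equivalence of categories. -/
def quotEquivOfEquivalence {C D : Type*} [Groupoid C] [Groupoid D] (F : C ≌ D) :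
    Quotient (isIsomorphicSetoid C) ≃ Quotient (isIsomorphicSetoid D) where
  toFun := Quotient.map F.functor.obj (fun _ _ ⟨i⟩ => ⟨F.functor.mapIso i⟩)
  invFun := Quotient.map F.inverse.obj (fun _ _ ⟨i⟩ => ⟨F.inverse.mapIso i⟩)
  left_inv := by
    intro q; induction q using Quotient.inductionOn with
    | h x => exact Quotient.sound ⟨F.unitIso.symm.app x⟩
  right_inv := by
    intro q; induction q using Quotient.inductionOn with
    | h x => exact Quotient.sound ⟨F.counitIso.app x⟩

/-- Groupoid cardinality is invariant under equivalence of (finite) groupoids. -/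
theorem groupoidCard_eq_of_equivalence
    (C D : Type*) [Groupoid C] [Groupoid D] [Finite C] [Finite D]
    [∀ x y : C, Finite (x ⟶ y)] [∀ x y : D, Finite (x ⟶ y)]
    (F : C ≌ D) : groupoidCard C = groupoidCard D := by
  unfold groupoidCard
  rw [← Equiv.tsum_eq (quotEquivOfEquivalence F)]
  congr 1
  funext O
  congr 2
  have h1 : Quotient.out (quotEquivOfEquivalence F O) ≅ F.functor.obj (Quotient.out O) := by
    have heq : (⟦(quotEquivOfEquivalence F O).out⟧ : _root_.Quotient (isIsomorphicSetoid D)) =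
        ⟦F.functor.obj O.out⟧ := by
      rw [Quotient.out_eq]
      conv_lhs => rw [← Quotient.out_eq O]
      rfl
    exact (Quotient.exact heq).some
  calc Nat.card (Aut (Quotient.out O))
      = Nat.card (Aut (F.functor.obj (Quotient.out O))) :=
        Nat.card_congr (F.fullyFaithfulFunctor.autMulEquivOfFullyFaithful _).toEquiv
    _ = Nat.card (Aut (Quotient.out (quotEquivOfEquivalence F O))) :=
        Nat.card_congr (Aut.autMulEquivOfIso h1.symm).toEquiv
end

section
/- Let G be a finite groupoid with objects G₀, and let a, b : G₀ → ℝ with a nowhere zero such that λ = b/a is constant on orbits. Let G' be an equivalent finite groupoid with objects G₀' and let a', b' : G₀' → ℝ with a' nowhere zero, λ' = b'/a' the corresponding invariant function under the equivalence. Then ∑_{y∈G₀} b(y)/(∑_{g∈r⁻¹(y)} a(l(g))) = ∑_{y'∈G₀'} b'(y')/(∑_{g'∈r'⁻¹(y')} a'(l'(g'))), assuming all denominators are nonzero. -/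
open CategoryTheory

section Aux

variable {C : Type*} [Groupoid C]

/-- Transport of hom-sets along isomorphisms. -/
noncomputable def homEquivOfIsos {x y z w : C} (e1 : x ≅ z) (e2 : y ≅ w) :
    (x ⟶ y) ≃ (z ⟶ w) where
  toFun g := e1.inv ≫ g ≫ e2.hom
  invFun h := e1.hom ≫ h ≫ e2.inv
  left_inv g := by simp
  right_inv h := by simp

lemma isempty_hom_of_not_iso {x y : C} (h : ¬ Nonempty (x ≅ y)) :
    IsEmpty (x ⟶ y) :=
  ⟨fun g => h ⟨(Groupoid.isoEquivHom x y).symm g⟩⟩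

/-- The orbit set bijection induced by an equivalence of groupoids. -/
noncomputable def orbitEquiv {D : Type*} [Groupoid D] (F : C ≌ D) :
    Quotient (isIsomorphicSetoid C) ≃ Quotient (isIsomorphicSetoid D) where
  toFun := Quotient.map F.functor.obj (fun x y h => ⟨F.functor.mapIso h.some⟩)
  invFun := Quotient.map F.inverse.obj (fun x y h => ⟨F.inverse.mapIso h.some⟩)
  left_inv := by
    rintro ⟨x⟩
    exact Quotient.sound ⟨(F.unitIso.app x).symm⟩
  right_inv := by
    rintro ⟨y⟩
    exact Quotient.sound ⟨F.counitIso.app y⟩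

lemma volume_eq_orbit_sum (C : Type*) [Groupoid C] [Finite C] [∀ x y : C, Finite (x ⟶ y)]
    (a b : C → ℝ) (ha : ∀ x, a x ≠ 0)
    (hinv : ∀ x y : C, Nonempty (x ≅ y) → b x / a x = b y / a y)
    (hden : ∀ y : C, ∑' g : (Σ x : C, x ⟶ y), a g.1 ≠ 0) :
    ∑' y : C, b y / (∑' g : (Σ x : C, x ⟶ y), a g.1) =
      ∑' q : Quotient (isIsomorphicSetoid C),
        (b q.out / a q.out) / (Nat.card (q.out ⟶ q.out) : ℝ) := by
  classical
  have : Fintype C := Fintype.ofFinite C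
  have : ∀ x y : C, Fintype (x ⟶ y) := fun x y => Fintype.ofFinite _
  set Q := Quotient (isIsomorphicSetoid C) with hQ
  have hiso : ∀ x y : C, (⟦x⟧ : Q) = ⟦y⟧ ↔ Nonempty (x ≅ y) := fun x y => Quotient.eq''
  have hout : ∀ y : C, Nonempty (y ≅ ((⟦y⟧ : Q).out)) := by
    intro y
    exact ((hiso y (⟦y⟧ : Q).out).1 (Quotient.out_eq _).symm)
  set A : Q → ℝ := fun q => ∑ x ∈ Finset.univ.filter (fun x => (⟦x⟧ : Q) = q), a x with hA
  set cQ : Q → ℝ := fun q => (Nat.card (q.out ⟶ q.out) : ℝ) with hcQ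
  -- card of hom-sets
  have hcard : ∀ x y : C, (⟦x⟧ : Q) = ⟦y⟧ → (Nat.card (x ⟶ y) : ℝ) = cQ ⟦y⟧ := by
    intro x y h
    have e1 : x ≅ (⟦y⟧ : Q).out := ((hiso x _).1 (h.trans (Quotient.out_eq _).symm)).some
    have e2 : y ≅ (⟦y⟧ : Q).out := (hout y).some
    rw [Nat.card_congr (homEquivOfIsos e1 e2)]
  -- the denominator
  have hD : ∀ y : C, (∑' g : (Σ x : C, x ⟶ y), a g.1) = cQ ⟦y⟧ * A ⟦y⟧ := by
    intro y
    rw [tsum_fintype, ← Finset.univ_sigma_univ, Finset.sum_sigma, hA, Finset.mul_sum,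
      Finset.sum_filter]
    apply Finset.sum_congr rfl
    intro x _
    have : ∑ s : x ⟶ y, a (⟨x, s⟩ : Σ x : C, x ⟶ y).1 = (Nat.card (x ⟶ y) : ℝ) * a x := by
      simp [Nat.card_eq_fintype_card, mul_comm]
    rw [this]
    by_cases h : (⟦x⟧ : Q) = ⟦y⟧
    · rw [if_pos h, hcard x y h]
    · have : IsEmpty (x ⟶ y) := isempty_hom_of_not_iso (fun hn => h ((hiso x y).2 hn))
      rw [if_neg h, Nat.card_of_isEmpty, Nat.cast_zero, zero_mul]
  -- A and cQ are nonzero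
  have hAcQ : ∀ q : Q, cQ q ≠ 0 ∧ A q ≠ 0 := by
    intro q
    have := hden q.out
    rw [hD q.out] at this
    rw [Quotient.out_eq] at this
    exact ⟨left_ne_zero_of_mul this, right_ne_zero_of_mul this⟩
  -- main computation
  rw [tsum_fintype, tsum_fintype,
    ← Finset.sum_fiberwise Finset.univ (fun y : C => (⟦y⟧ : Q))
      (fun y => b y / (∑' g : (Σ x : C, x ⟶ y), a g.1))]
  apply Finset.sum_congr rfl
  intro q _
  have hfiber : ∀ y ∈ Finset.univ.filter (fun y : C => (⟦y⟧ : Q) = q),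
      b y / (∑' g : (Σ x : C, x ⟶ y), a g.1) = (b q.out / a q.out) * a y / (cQ q * A q) := by
    intro y hy
    have hyq : (⟦y⟧ : Q) = q := (Finset.mem_filter.1 hy).2
    have hby : b y = (b q.out / a q.out) * a y := by
      have h := hinv y q.out ((hiso y q.out).1 (by rw [hyq, Quotient.out_eq]))
      rw [← h, div_mul_cancel₀ _ (ha y)]
    rw [hD y, hyq, hby]
  have hAq := (hAcQ q).2
  rw [Finset.sum_congr rfl hfiber, ← Finset.sum_div, ← Finset.mul_sum]
  have hsum : ∑ i ∈ Finset.univ.filter (fun y : C => (⟦y⟧ : Q) = q), a i = A q := rfl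
  rw [hsum, mul_comm (cQ q) (A q), ← div_div, mul_div_assoc, div_self hAq, mul_one]
end Aux

/-- Morita invariance of the weighted groupoid volume:  Let `G`, `G'` be equivalent
finite groupoids and `a, b` (resp. `a', b'`) real functions on the objects with `a`,
`a'` nowhere zero, such that `λ = b/a` and `λ' = b'/a'` are invariant (constant on
orbits) and correspond under the equivalence.  Then
`∑_y b(y)/(∑_{g∈r⁻¹(y)} a(l(g))) = ∑_{y'} b'(y')/(∑_{g'∈r'⁻¹(y')} a'(l'(g')))`. -/
theorem weighted_volume_morita_invariant
    (C D : Type*) [Groupoid C] [Groupoid D] [Finite C] [Finite D]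
    [∀ x y : C, Finite (x ⟶ y)] [∀ x y : D, Finite (x ⟶ y)]
    (F : C ≌ D)
    (a b : C → ℝ) (a' b' : D → ℝ)
    (ha : ∀ x, a x ≠ 0) (ha' : ∀ y, a' y ≠ 0)
    (hinv : ∀ x y : C, Nonempty (x ≅ y) → b x / a x = b y / a y)
    (hinv' : ∀ x y : D, Nonempty (x ≅ y) → b' x / a' x = b' y / a' y)
    (hcorr : ∀ x : C, b' (F.functor.obj x) / a' (F.functor.obj x) = b x / a x)
    (hden : ∀ y : C, ∑' g : (Σ x : C, x ⟶ y), a g.1 ≠ 0)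
    (hden' : ∀ y : D, ∑' g : (Σ x : D, x ⟶ y), a' g.1 ≠ 0) :
    ∑' y : C, b y / (∑' g : (Σ x : C, x ⟶ y), a g.1) =
      ∑' y : D, b' y / (∑' g : (Σ x : D, x ⟶ y), a' g.1) := by
  rw [volume_eq_orbit_sum C a b ha hinv hden, volume_eq_orbit_sum D a' b' ha' hinv' hden',
    ← (orbitEquiv F).tsum_eq]
  apply tsum_congr
  intro q
  have hq : orbitEquiv F q = ⟦F.functor.obj q.out⟧ := by
    conv_lhs => rw [← q.out_eq]
    rfl
  have h1 : Nonempty ((orbitEquiv F q).out ≅ F.functor.obj q.out) := by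
    have h2 := Quotient.mk_out (s := isIsomorphicSetoid D) (F.functor.obj q.out)
    rw [← hq] at h2
    exact h2
  have hl : b' (orbitEquiv F q).out / a' (orbitEquiv F q).out = b q.out / a q.out := by
    rw [hinv' _ _ h1, hcorr]
  have hc : (Nat.card ((orbitEquiv F q).out ⟶ (orbitEquiv F q).out) : ℝ) =
      (Nat.card (q.out ⟶ q.out) : ℝ) := by
    rw [Nat.card_congr (homEquivOfIsos h1.some h1.some),
      Nat.card_congr F.fullyFaithfulFunctor.homEquiv.symm]
  rw [hl, hc]
end
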